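/- Let m be a positive integer with 2^n ≤ m ≤ 2^n + 2^{n−1} − 2 for some n ≥ 1. Define λᵢ = 2^i for i ≤ n−2, λ_{n−1} = ⌊(m − (2^{n−1} − 1))/2⌋, and λₙ = ⌈(m − (2^{n−1} − 1))/2⌉. Then λ₀ + λ₁ + ⋯ + λₙ is an M-partition of m. -/

import Mathlib

lemma geo_sum_two (k : ℕ) : ∑ i ∈ Finset.range k, 2 ^ i = 2 ^ k - 1 := by
  induction k with
  | zero => simp
  | succ k ih =>
    rw [Finset.sum_range_succ, ih]
    have : 1 ≤ 2 ^ k := Nat.one_le_two_pow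
    have : 2 ^ (k + 1) = 2 * 2 ^ k := by ring
    omega

lemma complete_seq (lam : ℕ → ℕ) (k : ℕ)
    (h : ∀ i < k, lam i ≤ 1 + ∑ j ∈ Finset.range i, lam j) :
    ∀ l ≤ ∑ i ∈ Finset.range k, lam i,
      ∃ I ⊆ Finset.range k, ∑ i ∈ I, lam i = l := by
  induction k with
  | zero =>
    intro l hl
    exact ⟨∅, by simp, by simpa using (by simpa using hl : l = 0).symm⟩
  | succ k ih =>
    intro l hl
    rw [Finset.sum_range_succ] at hl
    by_cases hc : l ≤ ∑ i ∈ Finset.range k, lam i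
    · obtain ⟨I, hI, hs⟩ := ih (fun i hi => h i (by omega)) l hc
      exact ⟨I, hI.trans (Finset.range_subset_range.mpr (by omega)), hs⟩
    · push_neg at hc
      have hk := h k (Nat.lt_succ_self k)
      obtain ⟨I, hI, hs⟩ := ih (fun i hi => h i (by omega)) (l - lam k) (by omega)
      have hkI : k ∉ I := fun hkm => by
        have := hI hkm; simp at this
      refine ⟨insert k I, ?_, ?_⟩
      · intro x hx
        simp only [Finset.mem_insert] at hx
        rcases hx with rfl | hx
        · exact Finset.self_mem_range_succ _
        · exact Finset.range_subset_range.mpr (by omega) (hI hx)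
      · rw [Finset.sum_insert hkI, hs]
        omega

/-- For 2^n ≤ m ≤ 2^n + 2^{n−1} − 2 (n ≥ 1), with λᵢ = 2^i for
i ≤ n−2, λ_{n−1} = ⌊(m − (2^{n−1} − 1))/2⌋ and λₙ = ⌈(m − (2^{n−1} − 1))/2⌉,
the partition λ₀ + ⋯ + λₙ is an M-partition of m (i.e. a weakM-partition with
⌊log₂ m⌋ + 1 parts). -/
theorem algorithm3_M_partition (m n : ℕ) (hn : 1 ≤ n)
    (hml : 2 ^ n ≤ m) (hmu : m ≤ 2 ^ n + 2 ^ (n - 1) - 2)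
    (lam : ℕ → ℕ)
    (hsmall : ∀ i ≤ n - 2, lam i = 2 ^ i)
    (hpen : lam (n - 1) = (m - (2 ^ (n - 1) - 1)) / 2)
    (hlast : lam n = (m - (2 ^ (n - 1) - 1) + 1) / 2) :
    (∑ i ∈ Finset.range (n + 1), lam i = m) ∧
    (∀ l ≤ m, ∃ I ⊆ Finset.range (n + 1), ∑ i ∈ I, lam i = l) ∧
    n + 1 = Nat.log 2 m + 1 := by
  have hpow : 2 ^ n = 2 * 2 ^ (n - 1) := by
    conv_lhs => rw [show n = (n - 1) + 1 by omega]
    ring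
  have hp1 : 1 ≤ 2 ^ (n - 1) := Nat.one_le_two_pow
  have hn2 : 2 ≤ n := by
    by_contra h
    have hn1 : n = 1 := by omega
    subst hn1
    simp at hml hmu
    omega
  -- the sum
  have hsum : ∑ i ∈ Finset.range (n + 1), lam i = m := by
    have h1 : n + 1 = (n - 1) + 1 + 1 := by omega
    rw [h1, Finset.sum_range_succ, Finset.sum_range_succ,
        show n - 1 + 1 = n by omega]
    have h2 : ∑ i ∈ Finset.range (n - 1), lam i = 2 ^ (n - 1) - 1 := by
      rw [← geo_sum_two]
      exact Finset.sum_congr rfl fun i hi =>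
        hsmall i (by simp at hi; omega)
    rw [h2, hpen, hlast]
    omega
  refine ⟨hsum, ?_, ?_⟩
  · -- completeness
    have hcond : ∀ i < n + 1, lam i ≤ 1 + ∑ j ∈ Finset.range i, lam j := by
      intro i hi
      rcases Nat.lt_or_ge i (n - 1) with h | h
      · have hsi : ∑ j ∈ Finset.range i, lam j = 2 ^ i - 1 := by
          rw [← geo_sum_two]
          exact Finset.sum_congr rfl fun j hj => hsmall j (by simp at hj; omega)
        rw [hsi, hsmall i (by omega)]
        have : 1 ≤ 2 ^ i := Nat.one_le_two_pow
        omega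
      · have hprev : ∑ j ∈ Finset.range (n - 1), lam j = 2 ^ (n - 1) - 1 := by
          rw [← geo_sum_two]
          exact Finset.sum_congr rfl fun j hj => hsmall j (by simp at hj; omega)
        rcases Nat.lt_or_ge i n with h2 | h2
        · have : i = n - 1 := by omega
          subst this
          rw [hprev, hpen]
          omega
        · have hin : i = n := by omega
          have hr : Finset.range n = Finset.range ((n - 1) + 1) := by
            rw [show (n - 1) + 1 = n by omega]
          rw [hin, hr, Finset.sum_range_succ, hprev, hpen, hlast]
          omega
    intro l hl
    exact complete_seq lam (n + 1) hcond l (by omega)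
  · -- log
    have : Nat.log 2 m = n := by
      apply Nat.log_eq_of_pow_le_of_lt_pow hml
      have : 2 ^ (n + 1) = 2 * 2 ^ n := by ring
      omega
    omega
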